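/- Let Y(M|N) be the super Yangian with grading [a]=0 for a≤M, [a]=1 for a>M, and set T̃^{ab}(u) = (-1)^{[ā]([b̄]+1)} T^{b̄ā}(u) with ā = M+N+1−a and new grading [a]' = [ā]+1 (mod 2). Then the T̃^{ab}(u) satisfy the defining commutation relations of Y(N|M): [T̃^{ab}(u), T̃^{cd}(v)}' = (-1)^{[a]'[b]'+([a]'+[b]')[c]'} (u−v)^{-1} (T̃^{cb}(u)T̃^{ad}(v) − T̃^{cb}(v)T̃^{ad}(u)). -/
import Mathlib


/-- The ℤ₂-grading of `gl(M|N)`: `[a] = 0` for `a ≤ M`, `[a] = 1` for `a > M`. -/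
def gr (M N : ℕ) (a : Fin (M + N)) : ℕ := if (a : ℕ) < M then 0 else 1

/-- The order-reversing index map `ā = M+N+1−a` (written 0-indexed). -/
def rev (M N : ℕ) (a : Fin (M + N)) : Fin (M + N) :=
  ⟨M + N - 1 - (a : ℕ), by have := a.isLt; omega⟩

/-- The new grading `[a]' = [ā] + 1` (mod 2; we work with natural-number
exponents of `(-1)`, so only the parity matters). -/
def gr' (M N : ℕ) (a : Fin (M + N)) : ℕ := gr M N (rev M N a) + 1

/-- The transformed generators `T̃^{ab}(u) = (-1)^{[ā]([b̄]+1)} T^{b̄ā}(u)`. -/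
noncomputable def Ttilde (M N : ℕ) {A : Type*} [Ring A] [Algebra ℂ A]
    (T : Fin (M + N) → Fin (M + N) → ℂ → A)
    (a b : Fin (M + N)) (u : ℂ) : A :=
  ((-1 : ℂ) ^ (gr M N (rev M N a) * (gr M N (rev M N b) + 1)))
    • T (rev M N b) (rev M N a) u

/-- if `T` satisfies the defining relations of `Y(M|N)`, then the
`T̃^{ab}(u)` satisfy the defining commutation relations of `Y(N|M)` with respect
to the new grading `[a]' = [ā]+1`:
`[T̃^{ab}(u), T̃^{cd}(v)}' = (-1)^{[a]'[b]'+([a]'+[b]')[c]'} (u−v)⁻¹ (T̃^{cb}(u)T̃^{ad}(v) − T̃^{cb}(v)T̃^{ad}(u))`. -/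
theorem superYangian_swap (M N : ℕ) (A : Type*) [Ring A] [Algebra ℂ A]
    (T : Fin (M + N) → Fin (M + N) → ℂ → A)
    (hrel : ∀ (a b c d : Fin (M + N)) (u v : ℂ), u ≠ v →
      T a b u * T c d v
          - ((-1 : ℂ) ^ ((gr M N a + gr M N b) * (gr M N c + gr M N d)))
              • (T c d v * T a b u)
        = (((-1 : ℂ) ^ (gr M N a * gr M N b + (gr M N a + gr M N b) * gr M N c))
              / (u - v))
            • (T c b u * T a d v - T c b v * T a d u)) :
    ∀ (a b c d : Fin (M + N)) (u v : ℂ), u ≠ v →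
      Ttilde M N T a b u * Ttilde M N T c d v
          - ((-1 : ℂ) ^ ((gr' M N a + gr' M N b) * (gr' M N c + gr' M N d)))
              • (Ttilde M N T c d v * Ttilde M N T a b u)
        = (((-1 : ℂ) ^ (gr' M N a * gr' M N b + (gr' M N a + gr' M N b) * gr' M N c))
              / (u - v))
            • (Ttilde M N T c b u * Ttilde M N T a d v
                - Ttilde M N T c b v * Ttilde M N T a d u) := by

  intro a b c d u v huv
  have hvu : v ≠ u := fun h => huv h.symm
  have h := hrel (rev M N d) (rev M N c) (rev M N b) (rev M N a) v u hvu
  have hgr : ∀ x : Fin (M + N), gr M N x = 0 ∨ gr M N x = 1 := by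
    intro x; unfold gr; split <;> simp
  rw [show v - u = -(u - v) by ring, div_neg] at h
  simp only [Ttilde, gr', smul_mul_assoc, mul_smul_comm, smul_smul, smul_sub]
  rcases hgr (rev M N a) with ha | ha <;> rcases hgr (rev M N b) with hb | hb <;>
    rcases hgr (rev M N c) with hc | hc <;> rcases hgr (rev M N d) with hd | hd <;>
    rw [ha, hb, hc, hd] at h ⊢ <;> norm_num at h ⊢ <;>
    first
      | linear_combination (norm := module) (-1 : ℂ) • h
      | linear_combination (norm := module) (1 : ℂ) • h
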